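/- Let G be a bipartite graph, M a maximum matching in G, and 𝓔, 𝓤 the sets of even and unreachable vertices with respect to M. Then G contains no edge with one endpoint in 𝓔 and the other endpoint in 𝓔 ∪ 𝓤. -/

import Mathlib

open SimpleGraph

variable {V : Type*}

/-- `M` is a matching in the graph `G`: a set of edges of `G` no two of which
share a vertex. -/
def IsMatchingIn (G : SimpleGraph V) (M : Set (Sym2 V)) : Prop :=
  M ⊆ G.edgeSet ∧ ∀ e ∈ M, ∀ f ∈ M, e ≠ f → ∀ v : V, v ∈ e → v ∉ f

/-- A vertex `v` is matched (covered) by the matching `M`. -/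
def IsMatchedBy (M : Set (Sym2 V)) (v : V) : Prop :=
  ∃ e ∈ M, v ∈ e

/-- The list of edges of a path given as a list of vertices. -/
def pathEdges (p : List V) : List (Sym2 V) :=
  (p.zip p.tail).map fun q => s(q.1, q.2)

/-- `p` is an alternating path from `u` to `v` in `G` with respect to the matching `M`:
its consecutive vertices are adjacent in `G`, it repeats no vertex, and its edges
alternate between edges in `M` and edges not in `M`. -/
def IsAltPath (G : SimpleGraph V) (M : Set (Sym2 V)) (u v : V) (p : List V) : Prop :=
  p.Chain' G.Adj ∧ p.Nodup ∧
    (pathEdges p).Chain' (fun e f => (e ∈ M ↔ f ∉ M)) ∧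
    p.head? = some u ∧ p.getLast? = some v

/-- `v` is even with respect to `M`: there is an even-length alternating path from
an `M`-unmatched vertex to `v`. -/
def EvenVtx (G : SimpleGraph V) (M : Set (Sym2 V)) (v : V) : Prop :=
  ∃ u p, ¬ IsMatchedBy M u ∧ IsAltPath G M u v p ∧ Even (pathEdges p).length

/-- `v` is odd with respect to `M`: there is an odd-length alternating path from
an `M`-unmatched vertex to `v`. -/
def OddVtx (G : SimpleGraph V) (M : Set (Sym2 V)) (v : V) : Prop :=
  ∃ u p, ¬ IsMatchedBy M u ∧ IsAltPath G M u v p ∧ Odd (pathEdges p).length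

/-- `v` is unreachable with respect to `M`: there is no alternating path from any
`M`-unmatched vertex to `v`. -/
def UnreachableVtx (G : SimpleGraph V) (M : Set (Sym2 V)) (v : V) : Prop :=
  ¬ ∃ u p, ¬ IsMatchedBy M u ∧ IsAltPath G M u v p

/-- `M` is a maximum (cardinality) matching in `G`. -/
def IsMaxMatching (G : SimpleGraph V) (M : Set (Sym2 V)) : Prop :=
  IsMatchingIn G M ∧ ∀ N, IsMatchingIn G N → N.ncard ≤ M.ncard

/-- `G` is bipartite with the two sides given by `side`. -/
def IsBipartiteWith (G : SimpleGraph V) (side : V → Bool) : Prop :=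
  ∀ u v, G.Adj u v → side u ≠ side v

variable {G : SimpleGraph V} {M : Set (Sym2 V)} {side : V → Bool}

lemma pathEdges_length (p : List V) : (pathEdges p).length = p.length - 1 := by
  simp [pathEdges]

lemma pathEdges_getElem (p : List V) (i : ℕ) (h : i + 1 < p.length) :
    (pathEdges p)[i]'(by rw [pathEdges_length]; omega) =
      s(p[i]'(by omega), p[i+1]'h) := by
  simp [pathEdges]

lemma nodup_getElem_inj {p : List V} (hnd : p.Nodup) {i j : ℕ}
    (hi : i < p.length) (hj : j < p.length) (h : p[i]'hi = p[j]'hj) : i = j := by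
  rw [List.nodup_iff_injective_get] at hnd
  have := hnd (a₁ := ⟨i, hi⟩) (a₂ := ⟨j, hj⟩) (by simpa using h)
  exact congrArg Fin.val this

lemma chain'_getElem {R : V → V → Prop} {p : List V} (h : p.Chain' R) (i : ℕ)
    (hi : i + 1 < p.length) : R (p[i]'(by omega)) (p[i+1]'hi) := by
  rw [List.Chain', List.isChain_iff_getElem] at h
  simpa using h i (by omega)

variable {G : SimpleGraph V} {M : Set (Sym2 V)} {side : V → Bool}

lemma side_parity (hbip : IsBipartiteWith G side) {p : List V} (hc : p.Chain' G.Adj)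
    (i : ℕ) (hi : i < p.length) :
    (side (p[i]'hi) = side (p[0]'(by omega))) ↔ i % 2 = 0 := by
  induction i with
  | zero => simp
  | succ k ih =>
    have hadj := chain'_getElem hc k hi
    have hne := hbip _ _ hadj
    have hk := ih (by omega)
    revert hk hne
    cases hb : side (p[k]'(by omega : k < p.length)) <;>
      cases hb1 : side (p[k+1]'hi) <;>
      cases hb0 : side (p[0]'(by omega : 0 < p.length)) <;> simp <;> omega

lemma match_unique (hm : IsMatchingIn G M) {e f : Sym2 V} {x : V}
    (he : e ∈ M) (hf : f ∈ M) (hxe : x ∈ e) (hxf : x ∈ f) : e = f := by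
  by_contra h
  exact hm.2 e he f hf h x hxe hxf

lemma edge_inj {p : List V} (hnd : p.Nodup) {i j : ℕ}
    (hi : i + 1 < p.length) (hj : j + 1 < p.length)
    (h : s(p[i]'(by omega), p[i+1]'hi) = s(p[j]'(by omega), p[j+1]'hj)) : i = j := by
  rw [Sym2.eq_iff] at h
  rcases h with ⟨h1, _⟩ | ⟨h1, h2⟩
  · exact nodup_getElem_inj hnd _ _ h1
  · have e1 := nodup_getElem_inj hnd _ _ h1
    have e2 := nodup_getElem_inj hnd _ _ h2
    omega

/-- A matched vertex on an alternating walk whose endpoints are unmatched is matched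
by an odd-indexed walk edge. -/

lemma key_lemma (hm : IsMatchingIn G M) {p : List V}
    (halt : ∀ i, (h : i + 1 < p.length) → (s(p[i]'(by omega), p[i+1]'h) ∈ M ↔ i % 2 = 1))
    (hlen : 0 < p.length)
    (hu1 : ¬ IsMatchedBy M (p[0]'hlen))
    (hu2 : ¬ IsMatchedBy M (p[p.length-1]'(by omega)))
    {j : ℕ} (hj : j < p.length) {e : Sym2 V} (he : e ∈ M) (hxe : p[j]'hj ∈ e) :
    ∃ i, ∃ (h : i + 1 < p.length), i % 2 = 1 ∧ e = s(p[i]'(by omega), p[i+1]'h) := by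
  rcases Nat.eq_zero_or_pos j with rfl | hj0
  · exact absurd ⟨e, he, hxe⟩ hu1
  rcases eq_or_lt_of_le (by omega : j ≤ p.length - 1) with hjl | hjl
  · subst hjl; exact absurd ⟨e, he, hxe⟩ hu2
  -- 0 < j < p.length - 1
  rcases Nat.even_or_odd j with hpar | hpar
  · -- j even: the matched edge at p[j] is edge j-1
    rw [Nat.even_iff] at hpar
    refine ⟨j - 1, by omega, by omega, ?_⟩
    have hj1 : (j - 1) + 1 = j := by omega
    have hg : s(p[j-1]'(by omega), p[(j-1)+1]'(by omega)) ∈ M := by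
      rw [halt (j-1) (by omega)]; omega
    refine match_unique hm he hg hxe ?_
    simp only [hj1] at *
    exact Sym2.mem_mk_right _ _
  · -- j odd: the matched edge at p[j] is edge j
    refine ⟨j, by omega, by rw [Nat.odd_iff] at hpar; omega, ?_⟩
    have hg : s(p[j]'(by omega), p[j+1]'(by omega)) ∈ M := by
      rw [halt j (by omega)]; rw [Nat.odd_iff] at hpar; omega
    exact match_unique hm he hg hxe (Sym2.mem_mk_left _ _)

lemma card_range_filter_odd (m : ℕ) :
    ((Finset.range m).filter (fun i => i % 2 = 1)).card = m / 2 := by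
  induction m with
  | zero => simp
  | succ k ih =>
    rw [Finset.range_add_one, Finset.filter_insert]
    by_cases h : k % 2 = 1 <;> simp [h, Finset.card_insert_of_notMem, ih] <;> omega

lemma card_range_filter_even (m : ℕ) :
    ((Finset.range m).filter (fun i => i % 2 = 0)).card = m - m / 2 := by
  induction m with
  | zero => simp
  | succ k ih =>
    rw [Finset.range_add_one, Finset.filter_insert]
    by_cases h : k % 2 = 0 <;> simp [h, Finset.card_insert_of_notMem, ih] <;> omega

lemma augment [Fintype V] (hm : IsMaxMatching G M) {p : List V}
    (hn : 2 ≤ p.length) (hc : p.Chain' G.Adj) (hnd : p.Nodup)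
    (halt : ∀ i, (h : i + 1 < p.length) → (s(p[i]'(by omega), p[i+1]'h) ∈ M ↔ i % 2 = 1))
    (hlen : (p.length - 1) % 2 = 1)
    (hu1 : ¬ IsMatchedBy M (p[0]'(by omega)))
    (hu2 : ¬ IsMatchedBy M (p[p.length-1]'(by omega))) : False := by
  classical
  set n := p.length with hn'
  have hv0 : 0 < n := by omega
  set d := p[0]'hv0 with hd
  set g : ℕ → Sym2 V := fun i => s(p.getD i d, p.getD (i+1) d) with hg
  have hgeq : ∀ i, (h : i + 1 < n) → g i = s(p[i]'(by omega), p[i+1]'h) := by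
    intro i h
    simp only [hg]
    rw [List.getD_eq_getElem p d (by omega : i < p.length),
        List.getD_eq_getElem p d (by omega : i + 1 < p.length)]
  have hginj : ∀ i ∈ Finset.range (n-1), ∀ j ∈ Finset.range (n-1), g i = g j → i = j := by
    intro i hi j hj hij
    simp only [Finset.mem_range] at hi hj
    rw [hgeq i (by omega), hgeq j (by omega)] at hij
    exact edge_inj hnd (by omega) (by omega) hij
  set Sf : Finset (Sym2 V) := ((Finset.range (n-1)).filter (fun i => i % 2 = 1)).image g
    with hSf
  set Tf : Finset (Sym2 V) := ((Finset.range (n-1)).filter (fun i => i % 2 = 0)).image g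
    with hTf
  have hcS : Sf.card = (n-1)/2 := by
    rw [hSf, Finset.card_image_of_injOn, card_range_filter_odd]
    intro a ha b hb hab
    simp only [Finset.coe_filter, Set.mem_setOf_eq, Finset.mem_range] at ha hb
    exact hginj a (Finset.mem_range.2 ha.1) b (Finset.mem_range.2 hb.1) hab
  have hcT : Tf.card = (n-1) - (n-1)/2 := by
    rw [hTf, Finset.card_image_of_injOn, card_range_filter_even]
    intro a ha b hb hab
    simp only [Finset.coe_filter, Set.mem_setOf_eq, Finset.mem_range] at ha hb
    exact hginj a (Finset.mem_range.2 ha.1) b (Finset.mem_range.2 hb.1) hab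
  have hSfM : ∀ e ∈ Sf, e ∈ M := by
    intro e he
    simp only [hSf, Finset.mem_image, Finset.mem_filter, Finset.mem_range] at he
    obtain ⟨i, ⟨hi, hio⟩, rfl⟩ := he
    rw [hgeq i (by omega)]
    exact (halt i (by omega)).mpr hio
  have hTfM : ∀ e ∈ Tf, e ∉ M := by
    intro e he
    simp only [hTf, Finset.mem_image, Finset.mem_filter, Finset.mem_range] at he
    obtain ⟨i, ⟨hi, hio⟩, rfl⟩ := he
    rw [hgeq i (by omega)]
    intro hmem
    have := (halt i (by omega)).mp hmem
    omega
  have hTidx : ∀ e ∈ Tf, ∃ i, ∃ (h : i + 1 < n), i % 2 = 0 ∧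
      e = s(p[i]'(by omega), p[i+1]'h) := by
    intro e he
    simp only [hTf, Finset.mem_image, Finset.mem_filter, Finset.mem_range] at he
    obtain ⟨i, ⟨hi, hio⟩, rfl⟩ := he
    exact ⟨i, by omega, hio, hgeq i (by omega)⟩
  set N : Set (Sym2 V) := (M \ ↑Sf) ∪ ↑Tf with hN
  have hcross : ∀ e, e ∈ M → e ∉ Sf → ∀ f ∈ Tf, ∀ x, x ∈ e → x ∈ f → False := by
    intro e heM heS f hfT x hxe hxf
    obtain ⟨i, hi, hie, rfl⟩ := hTidx f hfT
    rw [Sym2.mem_iff] at hxf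
    have hx : ∃ j, ∃ (hj : j < n), p[j]'hj = x := by
      rcases hxf with h | h
      · exact ⟨i, by omega, h.symm⟩
      · exact ⟨i+1, by omega, h.symm⟩
    obtain ⟨j, hj, rfl⟩ := hx
    obtain ⟨i', hi', hodd, rfl⟩ := key_lemma hm.1 halt hv0 hu1 hu2 hj heM hxe
    exact heS (Finset.mem_image.2 ⟨i', Finset.mem_filter.2
      ⟨Finset.mem_range.2 (by omega), hodd⟩, (hgeq i' hi')⟩)
  have hNmatch : IsMatchingIn G N := by
    constructor
    · intro e he
      rcases he with ⟨heM, _⟩ | heT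
      · exact hm.1.1 heM
      · obtain ⟨i, hi, _, rfl⟩ := hTidx e (Finset.mem_coe.1 heT)
        exact (SimpleGraph.mem_edgeSet G).2 (chain'_getElem hc i hi)
    · intro e he f hf hne x hxe hxf
      rcases he with ⟨heM, heS⟩ | heT
      · rcases hf with ⟨hfM, _⟩ | hfT
        · exact hm.1.2 e heM f hfM hne x hxe hxf
        · exact hcross e heM (fun h => heS (Finset.mem_coe.2 h)) f (Finset.mem_coe.1 hfT)
            x hxe hxf
      · rcases hf with ⟨hfM, hfS⟩ | hfT
        · exact hcross f hfM (fun h => hfS (Finset.mem_coe.2 h)) e (Finset.mem_coe.1 heT)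
            x hxf hxe
        · obtain ⟨i, hi, hie, rfl⟩ := hTidx e (Finset.mem_coe.1 heT)
          obtain ⟨i', hi', hie', rfl⟩ := hTidx f (Finset.mem_coe.1 hfT)
          rw [Sym2.mem_iff] at hxe hxf
          have : i = i' := by
            rcases hxe with h | h <;> rcases hxf with h' | h' <;>
              [ (have := nodup_getElem_inj hnd (by omega : i < p.length)
                  (by omega : i' < p.length) (h.symm.trans h'));
                (have := nodup_getElem_inj hnd (by omega : i < p.length)
                  (by omega : i'+1 < p.length) (h.symm.trans h'));
                (have := nodup_getElem_inj hnd (by omega : i+1 < p.length)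
                  (by omega : i' < p.length) (h.symm.trans h'));
                (have := nodup_getElem_inj hnd (by omega : i+1 < p.length)
                  (by omega : i'+1 < p.length) (h.symm.trans h'))] <;> omega
          subst this
          exact hne rfl
  have hSsub : (↑Sf : Set (Sym2 V)) ⊆ M := fun e he => hSfM e (Finset.mem_coe.1 he)
  have hdisj : Disjoint (M \ (↑Sf : Set (Sym2 V))) (↑Tf : Set (Sym2 V)) := by
    rw [Set.disjoint_left]
    intro e he heT
    exact hTfM e (Finset.mem_coe.1 heT) he.1
  have h1 : N.ncard = (M \ (↑Sf : Set (Sym2 V))).ncard + (↑Tf : Set (Sym2 V)).ncard :=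
    Set.ncard_union_eq hdisj (Set.toFinite _) (Set.toFinite _)
  have h2 : (M \ (↑Sf : Set (Sym2 V))).ncard = M.ncard - Sf.card := by
    rw [Set.ncard_diff hSsub (Set.toFinite _), Set.ncard_coe_finset]
  have hScard_le : Sf.card ≤ M.ncard := by
    rw [← Set.ncard_coe_finset]
    exact Set.ncard_le_ncard hSsub (Set.toFinite M)
  have hNcard : N.ncard = M.ncard + 1 := by
    rw [h1, h2, Set.ncard_coe_finset, hcS, hcT]
    omega
  have := hm.2 N hNmatch
  omega

/-- Odd alternating walk between unmatched vertices contradicts maximality (bipartite). -/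

lemma extract [Fintype V] (hbip : IsBipartiteWith G side) (hm : IsMaxMatching G M) :
    ∀ n (p : List V) (_ : p.length = n) (h2 : 2 ≤ p.length) (_ : p.Chain' G.Adj)
    (_ : ∀ i, (h : i + 1 < p.length) → (s(p[i]'(by omega), p[i+1]'h) ∈ M ↔ i % 2 = 1))
    (_ : (p.length - 1) % 2 = 1)
    (_ : ¬ IsMatchedBy M (p[0]'(by omega)))
    (_ : ¬ IsMatchedBy M (p[p.length-1]'(by omega))), False := by
  intro n
  induction n using Nat.strong_induction_on with
  | _ n ih =>
  intro p hpn h2 hc halt hodd hu1 hu2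
  by_cases hnd : p.Nodup
  · exact augment hm h2 hc hnd halt hodd hu1 hu2
  -- find a duplicate
  rw [List.nodup_iff_injective_get] at hnd
  rw [Function.not_injective_iff] at hnd
  obtain ⟨a, b, hab, hne⟩ := hnd
  have hdup : ∃ i j, ∃ (hi : i < p.length) (hj : j < p.length),
      i < j ∧ p[i]'hi = p[j]'hj := by
    rcases lt_trichotomy a.val b.val with h | h | h
    · exact ⟨a.val, b.val, a.isLt, b.isLt, h, by simpa [List.get_eq_getElem] using hab⟩
    · exact absurd (Fin.ext h) hne
    · exact ⟨b.val, a.val, b.isLt, a.isLt, h, by simpa [List.get_eq_getElem] using hab.symm⟩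
  obtain ⟨i, j, hi, hj, hij, hpij⟩ := hdup
  -- j - i is even (bipartite)
  have hsi := side_parity hbip hc i hi
  have hsj := side_parity hbip hc j hj
  rw [hpij] at hsi
  have hpar : i % 2 = j % 2 := by
    have : i % 2 = 0 ↔ j % 2 = 0 := hsi.symm.trans hsj
    omega
  -- splice
  set q := p.take i ++ p.drop j with hq
  have hqlen : q.length = p.length - (j - i) := by
    simp [hq]; omega
  have hq1 : ∀ t, (ht : t < i) → q[t]'(by omega) = p[t]'(by omega) := by
    intro t ht
    rw [List.getElem_of_eq hq, List.getElem_append]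
    simp only [List.length_take]
    rw [dif_pos (by omega)]
    exact List.getElem_take
  have hq2 : ∀ t, (ht : t < q.length) → i ≤ t →
      q[t]'ht = p[j + (t - i)]'(by omega) := by
    intro t ht hit
    rw [List.getElem_of_eq hq, List.getElem_append]
    simp only [List.length_take]
    rw [dif_neg (by omega)]
    rw [List.getElem_drop]
    congr 1
    omega
  have hq0 : q[0]'(by omega) = p[0]'(by omega) := by
    rcases Nat.eq_zero_or_pos i with h0 | h0
    · rw [hq2 0 (by omega) (by omega)]
      subst h0
      simp only [Nat.sub_zero, Nat.add_zero]
      exact hpij.symm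
    · exact hq1 0 h0
  have hqlast : q[q.length-1]'(by omega) = p[p.length-1]'(by omega) := by
    rw [hq2 (q.length-1) (by omega) (by omega)]
    congr 1
    omega
  have hqc : q.Chain' G.Adj := by
    rw [List.Chain', List.isChain_iff_getElem]
    intro t ht
    rcases lt_trichotomy (t+1) i with h | h | h
    · rw [hq1 t (by omega), hq1 (t+1) (by omega)]
      exact chain'_getElem hc t (by omega)
    · rw [hq1 t (by omega), hq2 (t+1) (by omega) (by omega)]
      have : j + (t + 1 - i) = j := by omega
      simp only [this, ← hpij]
      have : t + 1 = i := h
      have hcc := chain'_getElem hc t (by omega)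
      simpa only [this] using hcc
    · rw [hq2 t (by omega) (by omega), hq2 (t+1) (by omega) (by omega)]
      have e1 : j + (t + 1 - i) = (j + (t - i)) + 1 := by omega
      simp only [e1]
      exact chain'_getElem hc (j + (t-i)) (by omega)
  have hqalt : ∀ t, (ht : t + 1 < q.length) →
      (s(q[t]'(by omega), q[t+1]'ht) ∈ M ↔ t % 2 = 1) := by
    intro t ht
    rcases lt_trichotomy (t+1) i with h | h | h
    · rw [hq1 t (by omega), hq1 (t+1) (by omega)]
      exact halt t (by omega)
    · rw [hq1 t (by omega), hq2 (t+1) (by omega) (by omega)]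
      have e0 : j + (t + 1 - i) = j := by omega
      simp only [e0, ← hpij]
      have e1 : t + 1 = i := h
      have hcc := halt t (by omega)
      simpa only [e1] using hcc
    · rw [hq2 t (by omega) (by omega), hq2 (t+1) (by omega) (by omega)]
      have e1 : j + (t + 1 - i) = (j + (t - i)) + 1 := by omega
      simp only [e1]
      rw [halt (j + (t-i)) (by omega)]
      omega
  have hq2le : 2 ≤ q.length := by
    have : (q.length - 1) % 2 = 1 := by omega
    omega
  refine ih (p.length - (j - i)) (by omega) q (by omega) (by omega) hqc hqalt
    (by omega) ?_ ?_
  · rw [hq0]; exact hu1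
  · rw [hqlast]; exact hu2

lemma toAltPath {p : List V} (hc : p.Chain' G.Adj) (hnd : p.Nodup) (hlen : 0 < p.length)
    (halt : ∀ i, (h : i + 1 < p.length) → (s(p[i]'(by omega), p[i+1]'h) ∈ M ↔ i % 2 = 1)) :
    IsAltPath G M (p[0]'hlen) (p[p.length-1]'(by omega)) p := by
  refine ⟨hc, hnd, ?_, ?_, ?_⟩
  · rw [List.Chain', List.isChain_iff_getElem]
    intro t ht
    rw [pathEdges_length] at ht
    rw [pathEdges_getElem p t (by omega), pathEdges_getElem p (t+1) (by omega)]
    rw [halt t (by omega), halt (t+1) (by omega)]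
    omega
  · rw [List.head?_eq_getElem?, List.getElem?_eq_getElem hlen]
  · rw [List.getLast?_eq_getElem?, List.getElem?_eq_getElem (by omega)]

lemma fromAltPath {u v : V} {p : List V} (h : IsAltPath G M u v p)
    (hu : ¬ IsMatchedBy M u) :
    ∃ (hlen : 0 < p.length), p[0]'hlen = u ∧ p[p.length-1]'(by omega) = v ∧
      ∀ i, (hi : i + 1 < p.length) → (s(p[i]'(by omega), p[i+1]'hi) ∈ M ↔ i % 2 = 1) := by
  obtain ⟨hc, hnd, hch, hh, hl⟩ := h
  rw [List.head?_eq_getElem?] at hh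
  have hlen : 0 < p.length := by
    rcases p with _ | ⟨a, t⟩
    · simp at hh
    · simp
  rw [List.getElem?_eq_getElem hlen] at hh
  have hp0 : p[0]'hlen = u := by injection hh
  rw [List.getLast?_eq_getElem?, List.getElem?_eq_getElem (by omega)] at hl
  have hpl : p[p.length-1]'(by omega) = v := by injection hl
  refine ⟨hlen, hp0, hpl, ?_⟩
  intro i
  induction i with
  | zero =>
    intro hi
    exact iff_of_false
      (fun hmem => hu ⟨_, hmem, by rw [← hp0]; exact Sym2.mem_mk_left _ _⟩)
      (by omega)
  | succ k ihk =>
    intro hi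
    rw [List.Chain', List.isChain_iff_getElem] at hch
    have hrel := hch k (by rw [pathEdges_length]; omega)
    rw [pathEdges_getElem p k (by omega), pathEdges_getElem p (k+1) (by omega)] at hrel
    have hk := ihk (by omega)
    rw [hk] at hrel
    by_cases hmem : (s(p[k+1]'(by omega), p[k+1+1]'hi) ∈ M)
    · have h1 : ¬ k % 2 = 1 := fun hh => (hrel.mp hh) hmem
      exact iff_of_true hmem (by omega)
    · have h1 : k % 2 = 1 := hrel.mpr hmem
      exact iff_of_false hmem (by omega)

lemma evenVtx_unpack {v : V} (h : EvenVtx G M v) :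
    ∃ (u : V) (p : List V) (hlen : 0 < p.length), ¬IsMatchedBy M u ∧
      p.Chain' G.Adj ∧ p.Nodup ∧
      p[0]'hlen = u ∧ p[p.length-1]'(by omega) = v ∧
      (∀ i, (hi : i + 1 < p.length) → (s(p[i]'(by omega), p[i+1]'hi) ∈ M ↔ i % 2 = 1)) ∧
      (p.length - 1) % 2 = 0 := by
  obtain ⟨u, p, hu, hap, hev⟩ := h
  obtain ⟨hlen, hp0, hpl, halt⟩ := fromAltPath hap hu
  rw [pathEdges_length, Nat.even_iff] at hev
  exact ⟨u, p, hlen, hu, hap.1, hap.2.1, hp0, hpl, halt, hev⟩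

lemma last_edge (hm : IsMatchingIn G M) {p : List V} {x y : V}
    (hlen : 0 < p.length)
    (halt : ∀ i, (hi : i + 1 < p.length) → (s(p[i]'(by omega), p[i+1]'hi) ∈ M ↔ i % 2 = 1))
    (heven : (p.length - 1) % 2 = 0)
    (hu : ¬ IsMatchedBy M (p[0]'hlen))
    (hx : p[p.length-1]'(by omega) = x)
    (hxy : s(x,y) ∈ M) (hne : x ≠ y) :
    ∃ (h2 : 2 ≤ p.length), p[p.length-2]'(by omega) = y := by
  have h2 : 2 ≤ p.length := by
    by_contra hh
    have h1 : p.length = 1 := by omega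
    apply hu
    refine ⟨s(x,y), hxy, ?_⟩
    have : p[0]'hlen = x := by rw [← hx]; congr 1; omega
    rw [this]; exact Sym2.mem_mk_left _ _
  refine ⟨h2, ?_⟩
  have hidx : (p.length - 2) + 1 = p.length - 1 := by omega
  have he : s(p[p.length-2]'(by omega), p[(p.length-2)+1]'(by omega)) ∈ M := by
    rw [halt (p.length-2) (by omega)]; omega
  have he' : s(p[p.length-2]'(by omega), p[p.length-1]'(by omega)) ∈ M := by
    have h3 := he
    simp only [hidx] at h3
    exact h3
  have hxin : x ∈ s(p[p.length-2]'(by omega), p[p.length-1]'(by omega)) := by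
    rw [← hx]; exact Sym2.mem_mk_right _ _
  have heq := match_unique hm he' hxy hxin (Sym2.mem_mk_left _ _)
  rw [Sym2.eq_iff] at heq
  rcases heq with ⟨_, h⟩ | ⟨h, _⟩
  · exact absurd (hx.symm.trans h) hne
  · exact h

lemma neighbor_reachable (hm : IsMatchingIn G M) {v w : V} (hvw : G.Adj v w)
    (hv : EvenVtx G M v) :
    ∃ u p, ¬ IsMatchedBy M u ∧ IsAltPath G M u w p := by
  obtain ⟨u, p, hlen, hu, hc, hnd, hp0, hpl, halt, hev⟩ := evenVtx_unpack hv
  by_cases hwp : w ∈ p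
  · obtain ⟨i, hi, hpi⟩ := List.mem_iff_getElem.1 hwp
    refine ⟨u, p.take (i+1), hu, ?_⟩
    have hlt : (p.take (i+1)).length = i+1 := by
      rw [List.length_take]; omega
    have hget : ∀ t, (ht : t < (p.take (i+1)).length) →
        (p.take (i+1))[t]'ht = p[t]'(by rw [hlt] at ht; omega) :=
      fun t ht => List.getElem_take
    have hnd' : (p.take (i+1)).Nodup := (List.take_sublist _ _).nodup hnd
    have halt' : ∀ t, (ht : t + 1 < (p.take (i+1)).length) →
        (s((p.take (i+1))[t]'(by omega), (p.take (i+1))[t+1]'ht) ∈ M ↔ t % 2 = 1) := by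
      intro t ht
      rw [hget t (by omega), hget (t+1) ht]
      exact halt t (by rw [hlt] at ht; omega)
    have hres := toAltPath (hc.take (i+1)) hnd' (by omega) halt'
    have e0 : (p.take (i+1))[0]'(by omega) = u := (hget 0 (by omega)).trans hp0
    have e1 : (p.take (i+1))[(p.take (i+1)).length - 1]'(by omega) = w := by
      rw [hget _ (by omega)]
      have hix : (p.take (i+1)).length - 1 = i := by omega
      simp only [hix]
      exact hpi
    rw [← e0, ← e1]
    exact hres
  · refine ⟨u, p ++ [w], hu, ?_⟩
    have hsvw : s(v,w) ∉ M := by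
      intro hmem
      obtain ⟨h2, hpw⟩ := last_edge hm hlen halt hev (by rw [hp0]; exact hu) hpl hmem hvw.ne
      exact hwp (by rw [← hpw]; exact List.getElem_mem _)
    have hlt : (p ++ [w]).length = p.length + 1 := by simp
    have hg1 : ∀ t, (ht : t < p.length) → (p ++ [w])[t]'(by simp; omega) = p[t]'ht := by
      intro t ht
      rw [List.getElem_append, dif_pos ht]
    have hg2 : (p ++ [w])[p.length]'(by simp) = w := by
      rw [List.getElem_append, dif_neg (lt_irrefl _)]
      simp
    have hnd' : (p ++ [w]).Nodup := by
      simp [List.nodup_append, hnd, hwp]; intro a ha h; exact hwp (h ▸ ha)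
    have hc' : (p ++ [w]).Chain' G.Adj := by
      rw [List.Chain', List.isChain_iff_getElem]
      intro t ht
      rw [hlt] at ht
      rcases lt_or_ge (t+1) p.length with h | h
      · rw [hg1 t (by omega), hg1 (t+1) h]
        exact chain'_getElem hc t h
      · have ht1 : t + 1 = p.length := by omega
        have hg2' : (p ++ [w])[t+1]'(by simp; omega) = w := by
          simp only [ht1]; exact hg2
        rw [hg1 t (by omega), hg2']
        have : p[t]'(by omega) = v := by
          rw [← hpl]; congr 1; omega
        rw [this]
        exact hvw
    have halt' : ∀ t, (ht : t + 1 < (p ++ [w]).length) →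
        (s((p ++ [w])[t]'(by omega), (p ++ [w])[t+1]'ht) ∈ M ↔ t % 2 = 1) := by
      intro t ht
      rw [hlt] at ht
      rcases lt_or_ge (t+1) p.length with h | h
      · rw [hg1 t (by omega), hg1 (t+1) h]
        exact halt t h
      · have ht1 : t + 1 = p.length := by omega
        have hg2' : (p ++ [w])[t+1]'(by simp; omega) = w := by
          simp only [ht1]; exact hg2
        rw [hg1 t (by omega), hg2']
        have hvv : p[t]'(by omega) = v := by
          rw [← hpl]; congr 1; omega
        rw [hvv]
        exact iff_of_false hsvw (by omega)
    have hres := toAltPath hc' hnd' (by simp) halt'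
    have e0 : (p ++ [w])[0]'(by simp) = u := (hg1 0 (by omega)).trans hp0
    have e1 : (p ++ [w])[(p ++ [w]).length - 1]'(by omega) = w := by
      have hix : (p ++ [w]).length - 1 = p.length := by simp
      simp only [hix]
      exact hg2
    rw [e0, e1] at hres
    exact hres

lemma glue [Fintype V] (hbip : IsBipartiteWith G side) (hm : IsMaxMatching G M)
    {P Q : List V} (hP1 : 0 < P.length) (hQ1 : 0 < Q.length)
    (hcP : P.Chain' G.Adj) (hcQ : Q.Chain' G.Adj)
    (haP : ∀ i, (h : i+1 < P.length) → (s(P[i]'(by omega), P[i+1]'h) ∈ M ↔ i % 2 = 1))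
    (haQ : ∀ i, (h : i+1 < Q.length) → (s(Q[i]'(by omega), Q[i+1]'h) ∈ M ↔ i % 2 = 1))
    (hadj : G.Adj (P[P.length-1]'(by omega)) (Q[Q.length-1]'(by omega)))
    (hjun : s(P[P.length-1]'(by omega), Q[Q.length-1]'(by omega)) ∈ M ↔
      (P.length-1) % 2 = 1)
    (hpar : (P.length + Q.length - 1) % 2 = 1)
    (huP : ¬ IsMatchedBy M (P[0]'hP1)) (huQ : ¬ IsMatchedBy M (Q[0]'hQ1)) : False := by
  set r := P ++ Q.reverse with hr
  set A := P.length with hA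
  set B := Q.length with hB
  have hrlen : r.length = A + B := by simp [hr]; omega
  have hr1 : ∀ t, (ht : t < A) → r[t]'(by omega) = P[t]'ht := by
    intro t ht
    rw [List.getElem_of_eq hr, List.getElem_append, dif_pos ht]
  have hr2 : ∀ t, (ht : t < A + B) → (h : A ≤ t) →
      r[t]'(by omega) = Q[B-1-(t-A)]'(by omega) := by
    intro t ht h
    rw [List.getElem_of_eq hr, List.getElem_append, dif_neg (by omega)]
    rw [List.getElem_reverse]
  have hrc : r.Chain' G.Adj := by
    rw [List.Chain', List.isChain_iff_getElem]
    intro t ht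
    rw [hrlen] at ht
    rcases lt_trichotomy (t+1) A with h | h | h
    · rw [hr1 t (by omega), hr1 (t+1) h]
      exact chain'_getElem hcP t h
    · rw [hr1 t (by omega), hr2 (t+1) (by omega) (by omega)]
      have e2 : t = A - 1 := by omega
      simp only [e2]
      have e1 : B - 1 - (A - 1 + 1 - A) = B - 1 := by omega
      simp only [e1]
      exact hadj
    · rw [hr2 t (by omega) (by omega), hr2 (t+1) (by omega) (by omega)]
      have e : B - 1 - (t - A) = (B - 1 - (t + 1 - A)) + 1 := by omega
      simp only [e]
      exact (chain'_getElem hcQ _ (by omega)).symm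
  have hralt : ∀ t, (ht : t + 1 < r.length) →
      (s(r[t]'(by omega), r[t+1]'ht) ∈ M ↔ t % 2 = 1) := by
    intro t ht
    rw [hrlen] at ht
    rcases lt_trichotomy (t+1) A with h | h | h
    · rw [hr1 t (by omega), hr1 (t+1) h]
      exact haP t h
    · rw [hr1 t (by omega), hr2 (t+1) (by omega) (by omega)]
      have e2 : t = A - 1 := by omega
      simp only [e2]
      have e1 : B - 1 - (A - 1 + 1 - A) = B - 1 := by omega
      simp only [e1]
      exact hjun
    · rw [hr2 t (by omega) (by omega), hr2 (t+1) (by omega) (by omega)]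
      have e : B - 1 - (t - A) = (B - 1 - (t + 1 - A)) + 1 := by omega
      simp only [e]
      rw [Sym2.eq_swap]
      rw [haQ (B - 1 - (t + 1 - A)) (by omega)]
      omega
  have hu1' : ¬ IsMatchedBy M (r[0]'(by omega)) := by
    rw [hr1 0 (by omega)]
    exact huP
  have hu2' : ¬ IsMatchedBy M (r[r.length-1]'(by omega)) := by
    have h0 : r[r.length-1]'(by omega) = r[A+B-1]'(by omega) := by
      congr 1
      omega
    rw [h0, hr2 (A+B-1) (by omega) (by omega)]
    have e : B - 1 - (A + B - 1 - A) = 0 := by omega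
    simp only [e]
    exact huQ
  exact extract hbip hm r.length r rfl (by omega) hrc hralt (by omega) hu1' hu2'

lemma chain'_dropLast {R : V → V → Prop} {p : List V} (h : p.Chain' R) :
    p.dropLast.Chain' R := by
  rw [List.dropLast_eq_take]
  exact h.take _

/-- `G` contains no edge with one endpoint even and the other endpoint
even or unreachable (labels taken with respect to a maximum matching `M`). -/
theorem no_edge_even_evenUnreachable [Fintype V]
    (G : SimpleGraph V) (side : V → Bool) (hbip : IsBipartiteWith G side)
    (M : Set (Sym2 V)) (hM : IsMaxMatching G M) :
    ∀ v w, G.Adj v w → EvenVtx G M v →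
      ¬ (EvenVtx G M w ∨ UnreachableVtx G M w) := by
  intro v w hvw hv hor
  rcases hor with hw | hw
  · obtain ⟨u1, p, hla, hu1, hcp, hndp, hp0, hpl, haltp, heva⟩ := evenVtx_unpack hv
    obtain ⟨u2, q, hlb, hu2, hcq, hndq, hq0, hql, haltq, hevb⟩ := evenVtx_unpack hw
    by_cases hsvw : s(v,w) ∈ M
    · obtain ⟨h2a, hpw⟩ := last_edge hM.1 hla haltp heva (by rw [hp0]; exact hu1)
        hpl hsvw hvw.ne
      obtain ⟨h2b, hqv⟩ := last_edge hM.1 hlb haltq hevb (by rw [hq0]; exact hu2)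
        hql (by rw [Sym2.eq_swap]; exact hsvw) hvw.symm.ne
      have hPlen : p.dropLast.length = p.length - 1 := List.length_dropLast
      have hQlen : q.dropLast.length = q.length - 1 := List.length_dropLast
      have haP : ∀ i, (h : i+1 < p.dropLast.length) →
          (s(p.dropLast[i]'(by omega), p.dropLast[i+1]'h) ∈ M ↔ i % 2 = 1) := by
        intro i h
        rw [List.getElem_dropLast, List.getElem_dropLast]
        exact haltp i (by omega)
      have haQ : ∀ i, (h : i+1 < q.dropLast.length) →
          (s(q.dropLast[i]'(by omega), q.dropLast[i+1]'h) ∈ M ↔ i % 2 = 1) := by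
        intro i h
        rw [List.getElem_dropLast, List.getElem_dropLast]
        exact haltq i (by omega)
      have eP : p.dropLast[p.dropLast.length - 1]'(by omega) = w := by
        rw [List.getElem_dropLast]
        simp only [hPlen]
        have e2 : p.length - 1 - 1 = p.length - 2 := by omega
        simp only [e2]
        exact hpw
      have eQ : q.dropLast[q.dropLast.length - 1]'(by omega) = v := by
        rw [List.getElem_dropLast]
        simp only [hQlen]
        have e2 : q.length - 1 - 1 = q.length - 2 := by omega
        simp only [e2]
        exact hqv
      refine glue hbip hM (P := p.dropLast) (Q := q.dropLast) (by omega) (by omega)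
        (chain'_dropLast hcp) (chain'_dropLast hcq) haP haQ ?_ ?_ (by omega) ?_ ?_
      · rw [eP, eQ]
        exact hvw.symm
      · rw [eP, eQ]
        exact iff_of_true (by rw [Sym2.eq_swap]; exact hsvw) (by omega)
      · rw [List.getElem_dropLast, hp0]
        exact hu1
      · rw [List.getElem_dropLast, hq0]
        exact hu2
    · refine glue hbip hM (P := p) (Q := q) hla hlb hcp hcq haltp haltq ?_ ?_
        (by omega) ?_ ?_
      · rw [hpl, hql]
        exact hvw
      · rw [hpl, hql]
        exact iff_of_false hsvw (by omega)
      · rw [hp0]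
        exact hu1
      · rw [hq0]
        exact hu2
  · exact hw (neighbor_reachable hM.1 hvw hv)
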